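/- arXiv:1104.3046 — 5 statements merged into one kernel-verified Lean document; each statement's English description precedes it below -/
import Mathlib

section
/- Let X be an n×n real (or complex) matrix with spectral norm ‖X‖₂ < 1. Then for any fixed m ≥ 2, det(I + X) = exp( Σ_{r=1}^{m-1} ((-1)^{r+1}/r) tr(X^r) + E_m(X) ), where |E_m(X)| ≤ (n/m) · ‖X‖₂^m / (1 - ‖X‖₂). -/
open scoped Matrix.Norms.L2Operator

set_option maxHeartbeats 1000000

namespace Det3Aux

variable {n : ℕ}

lemma entry_le (A : Matrix (Fin n) (Fin n) ℝ) (i j : Fin n) : |A i j| ≤ ‖A‖ := by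
  set v : EuclideanSpace ℝ (Fin n) := EuclideanSpace.single j (1:ℝ) with hv
  set y : EuclideanSpace ℝ (Fin n) := (EuclideanSpace.equiv (Fin n) ℝ).symm (A.mulVec v) with hy
  have h1 : y i = A i j := by
    simp [hy, hv, Matrix.mulVec, dotProduct, EuclideanSpace.single_apply]
  have h2 : ‖y‖ ≤ ‖A‖ * ‖v‖ := Matrix.l2_opNorm_mulVec A v
  have h3 : |y i| ≤ ‖y‖ := by
    rw [EuclideanSpace.norm_eq, ← Real.sqrt_sq (abs_nonneg (y i))]
    apply Real.sqrt_le_sqrt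
    rw [sq_abs]
    have := Finset.single_le_sum (f := fun k => ‖y k‖^2)
      (fun k _ => by positivity) (Finset.mem_univ i)
    simpa [sq_abs, Real.norm_eq_abs] using this
  rw [hv] at h2
  rw [EuclideanSpace.norm_single] at h2
  calc |A i j| = |y i| := by rw [h1]
    _ ≤ ‖y‖ := h3
    _ ≤ ‖A‖ * ‖(1:ℝ)‖ := h2
    _ ≤ ‖A‖ := by simp

lemma trace_le (A : Matrix (Fin n) (Fin n) ℝ) : |A.trace| ≤ n * ‖A‖ := by
  calc |A.trace| ≤ ∑ i : Fin n, |A i i| := by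
        simpa [Matrix.trace, Matrix.diag] using Finset.abs_sum_le_sum_abs (fun i => A i i) Finset.univ
    _ ≤ ∑ _i : Fin n, ‖A‖ := Finset.sum_le_sum fun i _ => entry_le A i i
    _ = n * ‖A‖ := by simp [Finset.sum_const]

noncomputable def traceCLM(n : ℕ) : Matrix (Fin n) (Fin n) ℝ →L[ℝ] ℝ :=
  LinearMap.mkContinuous (Matrix.traceLinearMap (Fin n) ℝ ℝ) n
    (fun A => by simpa [Real.norm_eq_abs] using trace_le A)

@[simp] lemma traceCLM_apply (A : Matrix (Fin n) (Fin n) ℝ) : traceCLM n A = A.trace := rfl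

-- derivative of f
lemma f_deriv (X : Matrix (Fin n) (Fin n) ℝ) (t : ℝ) (ht : |t| * ‖X‖ < 1) :
    HasDerivAt (fun s : ℝ => (1 + s • X).det)
      ((1 + t • X).det * ∑' k : ℕ, (-t) ^ k * ((X ^ (k+1)).trace)) t := by
  have hnorm : ‖-(t • X)‖ < 1 := by
    rwa [norm_neg, norm_smul, Real.norm_eq_abs]
  set B : Matrix (Fin n) (Fin n) ℝ := ∑' k : ℕ, (-(t • X)) ^ k with hB
  have hBsummable : Summable (fun k : ℕ => (-(t • X)) ^ k) :=
    summable_geometric_of_norm_lt_one hnorm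
  have hBleft : (1 + t • X) * B = 1 := by
    have := mul_neg_geom_series (-(t • X)) hnorm
    simpa [sub_neg_eq_add] using this
  set M : Matrix (Fin n) (Fin n) ℝ := B * X with hM
  -- trace M
  have htr : M.trace = ∑' k : ℕ, (-t) ^ k * ((X ^ (k+1)).trace) := by
    have hsum2 : Summable (fun k : ℕ => (-(t • X)) ^ k * X) := hBsummable.mul_right X
    have : M = ∑' k : ℕ, (-(t • X)) ^ k * X := by
      rw [hM, hB, hBsummable.tsum_mul_right]
    rw [this, ← traceCLM_apply, (traceCLM n).map_tsum hsum2]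
    congr 1
    ext k
    have : (-(t • X)) ^ k * X = (-t) ^ k • X ^ (k+1) := by
      rw [← neg_smul, smul_pow, smul_mul_assoc, ← pow_succ]
    rw [this]
    simp [Matrix.trace_smul, smul_eq_mul]
  -- factorization
  have hfact : ∀ s : ℝ, 1 + s • X = (1 + t • X) * (1 + (s - t) • M) := by
    intro s
    rw [mul_add, mul_one, mul_smul_comm, hM, ← mul_assoc, hBleft, one_mul]
    rw [add_assoc, ← add_smul]
    ring_nf
  set Q : Polynomial ℝ :=
    (Matrix.det (1 + (Polynomial.X : Polynomial ℝ) • M.map Polynomial.C)).divX.divX with hQ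
  have hdet : ∀ s : ℝ, (1 + s • X).det
      = (1 + t • X).det * (1 + M.trace * (s - t) + Q.eval (s - t) * (s - t)^2) := by
    intro s
    rw [hfact s, Matrix.det_mul, Matrix.det_one_add_smul (s - t) M]
  have h1 : HasDerivAt (fun s : ℝ => s - t) 1 t := (hasDerivAt_id t).sub_const t
  have h2 : HasDerivAt (fun s : ℝ => M.trace * (s - t)) (M.trace * 1) t := h1.const_mul _
  have hQd : HasDerivAt (fun s : ℝ => Q.eval (s - t)) (Q.derivative.eval (t - t) * 1) t :=
    HasDerivAt.comp (h₂ := fun u : ℝ => Q.eval u) (h := fun s : ℝ => s - t) t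
      (Q.hasDerivAt (t - t)) h1
  have hsq : HasDerivAt (fun s : ℝ => (s - t)^2) ((2 : ℕ) * (t - t)^(2-1) * 1) t := h1.pow 2
  have hprod : HasDerivAt (fun s : ℝ => Q.eval (s - t) * (s - t)^2)
      (Q.derivative.eval (t - t) * 1 * (t - t)^2 + Q.eval (t - t) * ((2:ℕ) * (t - t)^(2-1) * 1)) t :=
    hQd.mul hsq
  have hphi : HasDerivAt
      (fun s : ℝ => 1 + M.trace * (s - t) + Q.eval (s - t) * (s - t)^2) M.trace t := by
    have := ((h2.const_add 1).add hprod)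
    refine this.congr_deriv ?_
    simp
  have hfinal := hphi.const_mul ((1 + t • X).det)
  have hfun : (fun s : ℝ => (1 + s • X).det)
      = fun s : ℝ => (1 + t • X).det * (1 + M.trace * (s - t) + Q.eval (s - t) * (s - t)^2) :=
    funext hdet
  rw [← htr, hfun]
  exact hfinal

lemma trace_pow_le(X : Matrix (Fin n) (Fin n) ℝ) (r : ℕ) (hr : 0 < r) :
    |(X ^ r).trace| ≤ n * ‖X‖ ^ r :=
  (trace_le (X ^ r)).trans (by
    have := norm_pow_le' X hr
    have hn : (0:ℝ) ≤ n := Nat.cast_nonneg n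
    nlinarith [norm_nonneg (X ^ r), norm_nonneg X])

lemma g_deriv (X : Matrix (Fin n) (Fin n) ℝ) (hX : ‖X‖ < 1) (t : ℝ)
    (ht : |t| < 2 / (1 + ‖X‖)) :
    HasDerivAt (fun y : ℝ => ∑' k : ℕ, ((-1)^k * ((X ^ (k+1)).trace) / (k+1)) * y^(k+1))
      (∑' k : ℕ, (-1)^k * ((X ^ (k+1)).trace) * t^k) t := by
  set ρ : ℝ := 2 / (1 + ‖X‖) with hρ
  have hden : (0:ℝ) < 1 + ‖X‖ := by positivity
  have hρ1 : 1 < ρ := by rw [hρ, lt_div_iff₀ hden]; linarith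
  have hρX : ρ * ‖X‖ < 1 := by
    rw [hρ, div_mul_eq_mul_div, div_lt_one hden]
    nlinarith [norm_nonneg X]
  have hρXnn : 0 ≤ ρ * ‖X‖ := by positivity
  apply hasDerivAt_tsum_of_isPreconnected
    (u := fun k : ℕ => (n * ‖X‖) * (ρ * ‖X‖)^k)
    (g' := fun (k : ℕ) (y : ℝ) => (-1)^k * ((X ^ (k+1)).trace) * y^k)
    (t := Metric.ball (0:ℝ) ρ) (y₀ := 0)
  · exact (summable_geometric_of_lt_one hρXnn hρX).mul_left _
  · exact Metric.isOpen_ball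
  · exact (convex_ball (0:ℝ) ρ).isPreconnected
  · intro k y _
    have h := (hasDerivAt_pow (k+1) y).const_mul ((-1)^k * ((X ^ (k+1)).trace) / (k+1))
    refine h.congr_deriv ?_
    have : ((k:ℝ)+1) ≠ 0 := by positivity
    rw [Nat.add_sub_cancel]; push_cast
    field_simp
  · intro k y hy
    rw [Metric.mem_ball, Real.dist_eq, sub_zero] at hy
    have h1 : |(X ^ (k+1)).trace| ≤ n * ‖X‖ ^ (k+1) := trace_pow_le X (k+1) k.succ_pos
    have h2 : |y| ^ k ≤ ρ ^ k := pow_le_pow_left₀ (abs_nonneg y) hy.le k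
    have hXnn : (0:ℝ) ≤ ‖X‖ := norm_nonneg X
    have hnnn : (0:ℝ) ≤ (n:ℝ) := Nat.cast_nonneg n
    calc ‖(-1)^k * ((X ^ (k+1)).trace) * y^k‖
        = |(X ^ (k+1)).trace| * |y|^k := by
          simp [abs_mul, abs_pow, Real.norm_eq_abs]
      _ ≤ (n * ‖X‖ ^ (k+1)) * ρ ^ k := by
          apply mul_le_mul h1 h2 (by positivity) (by positivity)
      _ = (n * ‖X‖) * (ρ * ‖X‖)^k := by ring
  · exact Metric.mem_ball_self (by positivity)
  · apply Summable.congr (f := fun _ : ℕ => (0:ℝ)) summable_zero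
    intro k; simp
  · rwa [Metric.mem_ball, Real.dist_eq, sub_zero]

lemma det_eq_exp(X : Matrix (Fin n) (Fin n) ℝ) (hX : ‖X‖ < 1) :
    (1 + X).det = Real.exp (∑' k : ℕ, ((-1)^k * ((X ^ (k+1)).trace) / (k+1))) := by
  set g : ℝ → ℝ := fun y => ∑' k : ℕ, ((-1)^k * ((X ^ (k+1)).trace) / (k+1)) * y^(k+1) with hg
  set f : ℝ → ℝ := fun s => (1 + s • X).det with hf
  set F : ℝ → ℝ := fun t => f t * Real.exp (-(g t)) with hF
  have hXnn : (0:ℝ) ≤ ‖X‖ := norm_nonneg X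
  have hkey : ∀ t ∈ Set.Icc (0:ℝ) 1, HasDerivAt F 0 t := by
    intro t ht
    obtain ⟨ht0, ht1⟩ := ht
    have habs : |t| ≤ 1 := by rw [abs_of_nonneg ht0]; exact ht1
    have htX : |t| * ‖X‖ < 1 :=
      lt_of_le_of_lt (by nlinarith [abs_nonneg t]) hX
    have htρ : |t| < 2 / (1 + ‖X‖) := by
      have hden : (0:ℝ) < 1 + ‖X‖ := by positivity
      rw [lt_div_iff₀ hden]
      nlinarith
    have hfd := f_deriv X t htX
    have hgd := g_deriv X hX t htρ
    set c : ℝ := ∑' k : ℕ, (-1)^k * ((X ^ (k+1)).trace) * t^k with hc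
    have hcc : (∑' k : ℕ, (-t) ^ k * ((X ^ (k+1)).trace)) = c := by
      rw [hc]
      apply tsum_congr
      intro k
      rw [neg_pow]
      ring
    rw [hcc] at hfd
    have hexp : HasDerivAt (fun y : ℝ => Real.exp (-(g y)))
        (Real.exp (-(g t)) * (-c)) t := (hgd.neg).exp
    have := hfd.mul hexp
    refine this.congr_deriv ?_
    ring
  have hFcont : ContinuousOn F (Set.Icc 0 1) :=
    fun x hx => ((hkey x hx).continuousAt).continuousWithinAt
  have hFderiv : ∀ x ∈ Set.Ico (0:ℝ) 1, HasDerivWithinAt F 0 (Set.Ici x) x :=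
    fun x hx => ((hkey x ⟨hx.1, hx.2.le⟩).hasDerivWithinAt)
  have h10 := constant_of_has_deriv_right_zero hFcont hFderiv 1 (by norm_num)
  have hg0 : g 0 = 0 := by
    rw [hg]
    simp
  have hf0 : f 0 = 1 := by rw [hf]; simp
  rw [hF] at h10
  simp only [hg0, hf0, neg_zero, Real.exp_zero, mul_one] at h10
  have hg1 : g 1 = ∑' k : ℕ, ((-1)^k * ((X ^ (k+1)).trace) / (k+1)) := by
    rw [hg]; apply tsum_congr; intro k; rw [one_pow, mul_one]
  have hf1 : f 1 = (1 + X).det := by rw [hf]; simp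
  rw [hf1, hg1] at h10
  have hepos : Real.exp (-(∑' k : ℕ, ((-1)^k * ((X ^ (k+1)).trace) / (k+1)))) ≠ 0 :=
    Real.exp_ne_zero _
  field_simp [Real.exp_neg] at h10
  rw [← hg1]
  rw [hg1]
  have h11 := congrArg (· * Real.exp (∑' k : ℕ, ((-1)^k * ((X ^ (k+1)).trace) / (k+1)))) h10
  simp only [mul_assoc, ← Real.exp_add, neg_add_cancel, Real.exp_zero, mul_one, one_mul] at h11
  linarith [h10]

end Det3Aux

open Det3Aux in
/-- If `‖X‖₂ < 1` then for fixed `m ≥ 2`,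
`det(I + X) = exp(∑_{r=1}^{m-1} ((-1)^{r+1}/r) tr(X^r) + E_m)` with
`|E_m| ≤ (n/m)·‖X‖₂^m/(1-‖X‖₂)`. -/
theorem stmt_3 (n m : ℕ) (hm : 2 ≤ m) (X : Matrix (Fin n) (Fin n) ℝ)
    (hX : ‖X‖ < 1) :
    ∃ E : ℝ, |E| ≤ (n / m) * ‖X‖ ^ m / (1 - ‖X‖) ∧
      (1 + X).det =
        Real.exp ((∑ r ∈ Finset.Ico 1 m, (-1) ^ (r + 1) / r * (X ^ r).trace) + E) := by
  set S : ℕ → ℝ := fun r => (-1) ^ (r + 1) / r * (X ^ r).trace with hS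
  have hXnn : (0:ℝ) ≤ ‖X‖ := norm_nonneg X
  have hm0 : (0:ℝ) < m := by positivity
  have hS0 : S 0 = 0 := by simp [hS]
  have habs : ∀ r : ℕ, 1 ≤ r → |S r| = |(X ^ r).trace| / r := by
    intro r hr
    rw [hS]
    rw [abs_mul, abs_div, abs_pow, abs_neg, abs_one, one_pow, one_div,
      Nat.abs_cast, div_eq_inv_mul, mul_comm]
  have hSb : ∀ r : ℕ, |S r| ≤ n * ‖X‖ ^ r := by
    intro r
    rcases Nat.eq_zero_or_pos r with h | h
    · subst h; rw [hS0]; simp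
    · rw [habs r h]
      have h2 := trace_pow_le X r h
      have hrpos : (1:ℝ) ≤ (r:ℝ) := by exact_mod_cast h
      calc |(X ^ r).trace| / r ≤ |(X ^ r).trace| / 1 := by gcongr
        _ = |(X ^ r).trace| := div_one _
        _ ≤ n * ‖X‖ ^ r := h2
  have hSsummable : Summable S := by
    apply Summable.of_norm_bounded (g := fun r : ℕ => n * ‖X‖ ^ r)
      ((summable_geometric_of_lt_one hXnn hX).mul_left _)
    intro r
    simpa [Real.norm_eq_abs] using hSb r
  -- identify the tsum from det_eq_exp with ∑' S
  have hshift : (∑' k : ℕ, ((-1)^k * ((X ^ (k+1)).trace) / (k+1))) = ∑' r : ℕ, S r := by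
    rw [hSsummable.tsum_eq_zero_add, hS0, zero_add]
    apply tsum_congr
    intro k
    rw [hS]
    simp only [Nat.cast_add, Nat.cast_one]
    rw [pow_succ, pow_succ]
    ring
  have hsplit := hSsummable.sum_add_tsum_nat_add m
  set E : ℝ := ∑' i : ℕ, S (i + m) with hE
  have hrange : ∑ r ∈ Finset.range m, S r = ∑ r ∈ Finset.Ico 1 m, S r := by
    rw [Finset.range_eq_Ico, Finset.sum_eq_sum_Ico_succ_bot (by omega : 0 < m), hS0, zero_add]
  refine ⟨E, ?_, ?_⟩
  · -- bound on E
    have hb : ∀ i : ℕ, |S (i + m)| ≤ (n * ‖X‖ ^ m / m) * ‖X‖ ^ i := by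
      intro i
      rw [habs (i + m) (by omega)]
      have h2 := trace_pow_le X (i + m) (by omega)
      have him : (m:ℝ) ≤ ((i + m : ℕ):ℝ) := by exact_mod_cast Nat.le_add_left m i
      calc |(X ^ (i+m)).trace| / ((i+m : ℕ):ℝ) ≤ (n * ‖X‖ ^ (i+m)) / m := by
            gcongr
        _ = (n * ‖X‖ ^ m / m) * ‖X‖ ^ i := by rw [pow_add]; ring
    have hbsum : Summable (fun i : ℕ => (n * ‖X‖ ^ m / m) * ‖X‖ ^ i) :=
      (summable_geometric_of_lt_one hXnn hX).mul_left _
    have hbn : ∀ i : ℕ, ‖S (i + m)‖ ≤ (n * ‖X‖ ^ m / m) * ‖X‖ ^ i :=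
      fun i => by rw [Real.norm_eq_abs]; exact hb i
    have hn : Summable (fun i : ℕ => ‖S (i + m)‖) :=
      Summable.of_nonneg_of_le (fun i => norm_nonneg _) hbn hbsum
    calc |E| = ‖∑' i : ℕ, S (i + m)‖ := (Real.norm_eq_abs _).symm
      _ ≤ ∑' i : ℕ, ‖S (i + m)‖ := norm_tsum_le_tsum_norm hn
      _ ≤ ∑' i : ℕ, (n * ‖X‖ ^ m / m) * ‖X‖ ^ i := Summable.tsum_le_tsum hbn hn hbsum
      _ = (n * ‖X‖ ^ m / m) * (1 - ‖X‖)⁻¹ := by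
          rw [tsum_mul_left, tsum_geometric_of_lt_one hXnn hX]
      _ = (n / m) * ‖X‖ ^ m / (1 - ‖X‖) := by
          rw [div_eq_mul_inv, div_eq_mul_inv, div_eq_mul_inv]; ring
  · rw [det_eq_exp X hX, hshift, ← hsplit, hrange]
end

section
/- Let X be an n×n matrix with spectral norm ‖X‖₂ < 1 all of whose eigenvalues are non-negative real numbers. Then det(I - X) ≥ exp( - tr(X) / (1 - ‖X‖₂) ). -/
open scoped Matrix.Norms.L2Operator

open Polynomial in
lemma aux_eval_charpoly {n : ℕ} {R : Type*} [CommRing R] (M : Matrix (Fin n) (Fin n) R)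
    (t : R) : M.charpoly.eval t = (t • (1 : Matrix (Fin n) (Fin n) R) - M).det := by
  rw [Matrix.charpoly, eval_det, Matrix.matPolyEquiv_charmatrix]
  simp [Matrix.scalar_apply, Matrix.smul_one_eq_diagonal]

lemma aux_ptwise {t s : ℝ} (ht : 0 ≤ t) (hts : t ≤ s) (hs : s < 1) :
    Real.exp (-t / (1 - s)) ≤ 1 - t := by
  have h1 : (0:ℝ) < 1 - s := by linarith
  have ht1 : (0:ℝ) < 1 - t := by linarith
  have hx : 0 ≤ t / (1 - s) := div_nonneg ht h1.le
  have hu : 1 + t / (1 - s) ≤ Real.exp (t / (1 - s)) := by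
    have := Real.add_one_le_exp (t / (1 - s)); linarith
  have hupos : (0:ℝ) < 1 + t / (1 - s) := by positivity
  have key : 1 ≤ (1 - t) * (1 + t / (1 - s)) := by
    have h2 : (1 - t) * (1 + t / (1 - s)) = (1 - t) * ((1 - s) + t) / (1 - s) := by
      field_simp
    rw [h2, le_div_iff₀ h1]
    nlinarith [mul_nonneg ht (sub_nonneg.2 hts)]
  have : 1 ≤ (1 - t) * Real.exp (t / (1 - s)) :=
    key.trans (by nlinarith [Real.exp_pos (t / (1 - s))])
  rw [neg_div, Real.exp_neg, ← inv_inv (1 - t)]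
  apply inv_anti₀ (by positivity)
  rw [inv_eq_one_div, div_le_iff₀ ht1]
  nlinarith [this]

lemma aux_sum (S : Multiset ℝ) : (S.map Complex.ofReal).sum = ((S.sum : ℝ) : ℂ) := by
  induction S using Multiset.induction_on with
  | empty => simp
  | cons a T ih => simp [ih]

lemma aux_prod (S : Multiset ℝ) :
    (S.map (fun t : ℝ => 1 - (t : ℂ))).prod = (((S.map (fun t => 1 - t)).prod : ℝ) : ℂ) := by
  induction S using Multiset.induction_on with
  | empty => simp
  | cons a T ih => simp only [Multiset.map_cons, Multiset.prod_cons, ih]; push_cast; ring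

lemma aux_multiset (s : ℝ) (hs : s < 1) (S : Multiset ℝ)
    (h : ∀ t ∈ S, 0 ≤ t ∧ t ≤ s) :
    Real.exp (-S.sum / (1 - s)) ≤ (S.map (fun t => 1 - t)).prod := by
  induction S using Multiset.induction_on with
  | empty => simp
  | cons a S ih =>
    have ha := h a (Multiset.mem_cons_self a S)
    have hS : ∀ t ∈ S, 0 ≤ t ∧ t ≤ s := fun t htS => h t (Multiset.mem_cons_of_mem htS)
    rw [Multiset.map_cons, Multiset.prod_cons, Multiset.sum_cons, neg_add, add_div,
      Real.exp_add]
    exact mul_le_mul (aux_ptwise ha.1 ha.2 hs) (ih hS) (Real.exp_pos _).le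
      (by linarith [ha.2, ha.1])

/-- If `‖X‖₂ < 1` and all eigenvalues of `X` are non-negative reals, then
`det(I - X) ≥ exp(-tr X / (1 - ‖X‖₂))`. -/
theorem stmt_4 (n : ℕ) (X : Matrix (Fin n) (Fin n) ℝ) (hX : ‖X‖ < 1)
    (heig : ∀ μ : ℂ, μ ∈ spectrum ℂ (X.map (Complex.ofReal)) →
      ∃ t : ℝ, 0 ≤ t ∧ μ = (t : ℂ)) :
    Real.exp (-X.trace / (1 - ‖X‖)) ≤ (1 - X).det := by
  rcases Nat.eq_zero_or_pos n with hn | hn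
  · subst hn
    have hX0 : X = 0 := Subsingleton.elim X 0
    simp [hX0, Matrix.det_isEmpty]
  haveI : Nonempty (Fin n) := Fin.pos_iff_nonempty.mp hn
  set M : Matrix (Fin n) (Fin n) ℂ := X.map (Complex.ofReal) with hM
  have hMmap : M = Complex.ofRealHom.mapMatrix X := rfl
  -- each root of the charpoly of M is a real number t with 0 ≤ t ≤ ‖X‖
  have hroot : ∀ r ∈ M.charpoly.roots, ∃ t : ℝ, 0 ≤ t ∧ t ≤ ‖X‖ ∧ r = (t : ℂ) := by
    intro r hr
    have hr0 : M.charpoly.eval r = 0 := by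
      have := Polynomial.isRoot_of_mem_roots hr
      simpa using this
    have hdet : (r • (1 : Matrix (Fin n) (Fin n) ℂ) - M).det = 0 := by
      rw [← aux_eval_charpoly]; exact hr0
    have hspec : r ∈ spectrum ℂ M := by
      rw [spectrum.mem_iff]
      intro hunit
      rw [Matrix.isUnit_iff_isUnit_det] at hunit
      rw [Algebra.algebraMap_eq_smul_one] at hunit
      rw [hdet] at hunit
      exact (not_isUnit_zero hunit)
    obtain ⟨t, ht0, htr⟩ := heig r hspec
    refine ⟨t, ht0, ?_, htr⟩
    -- t is a real eigenvalue of X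
    have hdetR : ((t • (1 : Matrix (Fin n) (Fin n) ℝ) - X).det : ℂ) = 0 := by
      have hmm : Complex.ofRealHom.mapMatrix (t • (1 : Matrix (Fin n) (Fin n) ℝ) - X)
          = r • (1 : Matrix (Fin n) (Fin n) ℂ) - M := by
        rw [htr, hMmap]
        ext i j
        simp [Matrix.one_apply, Matrix.smul_apply, RingHom.mapMatrix_apply,
          Matrix.map_apply, Matrix.sub_apply]
        split <;> simp
      calc ((t • (1 : Matrix (Fin n) (Fin n) ℝ) - X).det : ℂ)
          = (Complex.ofRealHom.mapMatrix (t • (1 : Matrix (Fin n) (Fin n) ℝ) - X)).det :=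
            RingHom.map_det Complex.ofRealHom _
        _ = 0 := by rw [hmm, hdet]
    have hdetR' : (t • (1 : Matrix (Fin n) (Fin n) ℝ) - X).det = 0 := by
      exact_mod_cast hdetR
    have htX : t ∈ spectrum ℝ X := by
      rw [spectrum.mem_iff]
      intro hunit
      rw [Matrix.isUnit_iff_isUnit_det] at hunit
      rw [Algebra.algebraMap_eq_smul_one, hdetR'] at hunit
      exact (not_isUnit_zero hunit)
    have := spectrum.norm_le_norm_of_mem htX
    calc t ≤ |t| := le_abs_self t
      _ = ‖t‖ := rfl
      _ ≤ ‖X‖ := this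
  -- the multiset of real eigenvalues
  set R : Multiset ℂ := M.charpoly.roots with hR
  obtain ⟨S, hRS, hSmem⟩ : ∃ S : Multiset ℝ,
      R = S.map (Complex.ofReal) ∧ ∀ t ∈ S, 0 ≤ t ∧ t ≤ ‖X‖ := by
    refine ⟨R.map Complex.re, ?_, ?_⟩
    · rw [Multiset.map_map]
      conv_lhs => rw [← Multiset.map_id R]
      exact (Multiset.map_congr rfl fun r hr => by
        obtain ⟨t, _, _, htr⟩ := hroot r hr
        simp [htr]).symm
    · intro t ht
      obtain ⟨r, hr, hrt⟩ := Multiset.mem_map.mp ht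
      obtain ⟨t', h0, h1, htr⟩ := hroot r hr
      have : t = t' := by rw [htr] at hrt; simpa using hrt.symm
      exact this ▸ ⟨h0, h1⟩
  -- trace
  have htr : X.trace = S.sum := by
    have h1 : M.trace = R.sum := Matrix.trace_eq_sum_roots_charpoly M
    have h2 : M.trace = (X.trace : ℂ) := by
      rw [hMmap]
      simp [Matrix.trace, RingHom.mapMatrix_apply, Matrix.diag, Matrix.map_apply]
    have h3 : R.sum = ((S.sum : ℝ) : ℂ) := by
      rw [hRS]; exact aux_sum S
    rw [h2, h3] at h1
    exact_mod_cast h1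
  -- determinant
  have hdet : ((1 : Matrix (Fin n) (Fin n) ℝ) - X).det = (S.map (fun t => 1 - t)).prod := by
    have hsp : M.charpoly.Splits := IsAlgClosed.splits _
    have hmon := M.charpoly_monic
    have h1 : M.charpoly.eval 1 = (R.map (fun a => 1 - a)).prod := by
      conv_lhs => rw [hsp.eq_prod_roots_of_monic hmon]
      rw [Polynomial.eval_multiset_prod, Multiset.map_map]
      congr 1
      apply Multiset.map_congr rfl
      intro r _
      simp
    have h2 : M.charpoly.eval 1 = ((1 : Matrix (Fin n) (Fin n) ℂ) - M).det := by
      rw [aux_eval_charpoly]; rw [one_smul]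
    have h3 : ((1 : Matrix (Fin n) (Fin n) ℂ) - M).det
        = (((1 : Matrix (Fin n) (Fin n) ℝ) - X).det : ℂ) := by
      rw [hMmap]
      rw [← map_one Complex.ofRealHom.mapMatrix, ← map_sub, ← RingHom.map_det]
      rfl
    have h4 : (R.map (fun a => 1 - a)).prod = (((S.map (fun t => 1 - t)).prod : ℝ) : ℂ) := by
      rw [hRS, Multiset.map_map]
      exact aux_prod S
    rw [h1, h3, h4] at h2
    exact_mod_cast h2.symm
  rw [htr, hdet]
  exact aux_multiset ‖X‖ hX S hSmem
end

section
/- |cos x| ≤ exp(-x²/2) for all real x with |x| ≤ 9π/16. -/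
open Real

/-- `(1 - t/ (n:ℝ))^n ≤ exp (-t)` style bound, specialized: `exp (-t) = exp (-t/n)^n ≥ (1-t/n)^n`. -/
lemma exp_neg_ge_pow (t : ℝ) (n : ℕ) (hn : 0 < n) (hb : 0 ≤ 1 - t / n) :
    (1 - t / n) ^ n ≤ Real.exp (-t) := by
  have h1 : Real.exp (-t) = Real.exp (-(t / n)) ^ n := by
    rw [← Real.exp_nat_mul]
    congr 1
    field_simp
  rw [h1]
  apply pow_le_pow_left₀ hb
  have := Real.add_one_le_exp (-(t / n))
  linarith

/-- `cos y ≤ 1 - y²/2 + y⁴/16 - y⁶/512` for `0 ≤ y ≤ π/2`. -/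
lemma cos_upper (y : ℝ) (hy0 : 0 ≤ y) (hy : y ≤ Real.pi / 2) :
    Real.cos y ≤ 1 - y ^ 2 / 2 + y ^ 4 / 16 - y ^ 6 / 512 := by
  rcases eq_or_lt_of_le hy0 with rfl | hy0'
  · norm_num
  have hhalf_pos : 0 < y / 2 := by linarith
  have hhalf_le : y / 2 ≤ 1 := by
    have := Real.pi_lt_d4
    linarith
  have hsin : y / 2 - (y / 2) ^ 3 / 4 < Real.sin (y / 2) := by
    have := Real.sin_gt_sub_cube hhalf_pos
    nlinarith [pow_pos hhalf_pos 3]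
  have hcos_eq : Real.cos y = 1 - 2 * Real.sin (y / 2) ^ 2 := by
    have h2 := Real.cos_two_mul (y / 2)
    have h3 := Real.sin_sq_add_cos_sq (y / 2)
    have hy2 : 2 * (y / 2) = y := by ring
    rw [hy2] at h2
    linarith
  have hlb_nonneg : 0 ≤ y / 2 - (y / 2) ^ 3 / 4 := by
    have hs : (y / 2) ^ 2 ≤ 1 := by nlinarith
    nlinarith [mul_nonneg hhalf_pos.le (sub_nonneg.mpr hs)]
  have hsq : (y / 2 - (y / 2) ^ 3 / 4) ^ 2 ≤ Real.sin (y / 2) ^ 2 := by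
    have hsin' : 0 ≤ Real.sin (y / 2) := le_of_lt (lt_of_le_of_lt hlb_nonneg hsin)
    nlinarith
  rw [hcos_eq]
  nlinarith [hsq]

/-- `|cos x| ≤ exp (-x²/2)` for all real `x` with `|x| ≤ 9π/16`. -/
theorem stmt_12 (x : ℝ) (hx : |x| ≤ 9 * Real.pi / 16) :
    |Real.cos x| ≤ Real.exp (-x ^ 2 / 2) := by
  set y := |x| with hy_def
  have hy0 : 0 ≤ y := abs_nonneg x
  have hcosy : Real.cos y = Real.cos x := Real.cos_abs x
  have hsq : y ^ 2 = x ^ 2 := sq_abs x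
  have hpi_lt : Real.pi < 3.1416 := Real.pi_lt_d4
  have hpi_gt : (3.1415 : ℝ) < Real.pi := Real.pi_gt_d4
  rw [← hcosy, ← hsq]
  rcases le_or_gt y (Real.pi / 2) with hcase | hcase
  · -- main case: cos y ≥ 0
    have hcos_nonneg : 0 ≤ Real.cos y :=
      Real.cos_nonneg_of_neg_pi_div_two_le_of_le (by linarith) hcase
    rw [abs_of_nonneg hcos_nonneg]
    have hub := cos_upper y hy0 hcase
    have hexp : (1 - y ^ 2 / 8) ^ 4 ≤ Real.exp (-(y ^ 2 / 2)) := by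
      have hb : 0 ≤ 1 - y ^ 2 / 2 / (4 : ℕ) := by
        push_cast
        nlinarith [hcase, hpi_lt]
      have := exp_neg_ge_pow (y ^ 2 / 2) 4 (by norm_num) hb
      calc (1 - y ^ 2 / 8) ^ 4 = (1 - y ^ 2 / 2 / (4:ℕ)) ^ 4 := by push_cast; ring
        _ ≤ Real.exp (-(y ^ 2 / 2)) := this
    have hpoly : 1 - y ^ 2 / 2 + y ^ 4 / 16 - y ^ 6 / 512 ≤ (1 - y ^ 2 / 8) ^ 4 := by
      have hylt : y ^ 2 ≤ 8 := by nlinarith [hcase, hpi_lt]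
      nlinarith [sq_nonneg y, sq_nonneg (y ^ 2), mul_nonneg (mul_nonneg (sq_nonneg y) (sq_nonneg y)) (sub_nonneg.mpr hylt)]
    have : Real.cos y ≤ Real.exp (-(y ^ 2 / 2)) := le_trans hub (le_trans hpoly hexp)
    calc Real.cos y ≤ Real.exp (-(y ^ 2 / 2)) := this
      _ = Real.exp (-y ^ 2 / 2) := by ring_nf
  · -- tail case: π/2 < y ≤ 9π/16
    have hyub : y ≤ 9 * Real.pi / 16 := hx
    have hcos_nonpos : Real.cos y ≤ 0 :=
      Real.cos_nonpos_of_pi_div_two_le_of_le hcase.le (by linarith)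
    rw [abs_of_nonpos hcos_nonpos]
    have hsin_eq : Real.sin (y - Real.pi / 2) = -Real.cos y := Real.sin_sub_pi_div_two y
    have h1 : -Real.cos y ≤ y - Real.pi / 2 := by
      rw [← hsin_eq]
      exact Real.sin_le (by linarith)
    have h2 : y - Real.pi / 2 ≤ Real.pi / 16 := by linarith
    -- lower bound on exp side
    have hb : 0 ≤ 1 - y ^ 2 / 2 / (32 : ℕ) := by
      push_cast
      nlinarith [hyub, hpi_lt, hy0]
    have hexp : (1 - y ^ 2 / 64) ^ 32 ≤ Real.exp (-(y ^ 2 / 2)) := by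
      have := exp_neg_ge_pow (y ^ 2 / 2) 32 (by norm_num) hb
      calc (1 - y ^ 2 / 64) ^ 32 = (1 - y ^ 2 / 2 / (32:ℕ)) ^ 32 := by push_cast; ring
        _ ≤ Real.exp (-(y ^ 2 / 2)) := this
    have hbase : (0.9512 : ℝ) ≤ 1 - y ^ 2 / 64 := by
      nlinarith [hyub, hpi_lt, hy0]
    have hmono : (0.9512 : ℝ) ^ 32 ≤ (1 - y ^ 2 / 64) ^ 32 :=
      pow_le_pow_left₀ (by norm_num) hbase 32
    have hnum : Real.pi / 16 ≤ (0.9512 : ℝ) ^ 32 := by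
      nlinarith [hpi_lt]
    calc -Real.cos y ≤ Real.pi / 16 := by linarith
      _ ≤ (0.9512 : ℝ) ^ 32 := hnum
      _ ≤ (1 - y ^ 2 / 64) ^ 32 := hmono
      _ ≤ Real.exp (-(y ^ 2 / 2)) := hexp
      _ = Real.exp (-y ^ 2 / 2) := by ring_nf
end

section
/- Let G be a simple graph on n vertices with algebraic connectivity λ₁ ≥ σn (σ > 0), and let A ⊆ V(G) with |A| ≥ an and |A| ≤ n - σn/4 for some a > 0. Then the number of vertices w ∉ A having at least αn neighbors in A is at least αn, where α = aσ³/32. -/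
open Matrix

open scoped Classical
/-- Expansion property: if `λ₁(G) ≥ σn` and `A ⊆ V(G)` with `an ≤ |A| ≤ n - σn/4`,
then at least `αn` vertices outside `A` have at least `αn` neighbours in `A`,
where `α = aσ³/32`. -/
theorem stmt_17 (σ a : ℝ) (hσ : 0 < σ) (ha : 0 < a) (n : ℕ)
    (G : SimpleGraph (Fin n)) [DecidableRel G.Adj] (A : Finset (Fin n))
    (hcon : ∀ x : Fin n → ℝ, (∑ i, x i) = 0 →
      σ * n * (x ⬝ᵥ x) ≤ x ⬝ᵥ (G.lapMatrix ℝ).mulVec x)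
    (hA1 : a * n ≤ (A.card : ℝ)) (hA2 : (A.card : ℝ) ≤ n - σ * n / 4) :
    a * σ ^ 3 / 32 * n ≤
      ((Finset.univ.filter fun w => w ∉ A ∧
          a * σ ^ 3 / 32 * n ≤ ((A.filter fun u => G.Adj w u).card : ℝ)).card : ℝ) := by
  rcases Nat.eq_zero_or_pos n with rfl | hn
  · simp
  have hN : (0 : ℝ) < (n : ℝ) := by exact_mod_cast hn
  set N : ℝ := (n : ℝ) with hNdef
  set k : ℝ := (A.card : ℝ) with hkdef
  set α : ℝ := a * σ ^ 3 / 32 with hαdef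
  have hα : 0 < α := by rw [hαdef]; positivity
  have hkN : k ≤ N := by
    have h := A.card_le_univ
    simp only [Finset.card_univ, Fintype.card_fin] at h
    rw [hkdef, hNdef]
    exact_mod_cast h
  set c : ℝ := k / N with hcdef
  set x : Fin n → ℝ := fun i => if i ∈ A then 1 - c else -c with hxdef
  have hx' : ∀ i, x i = (if i ∈ A then (1 : ℝ) else 0) - c := by
    intro i; by_cases h : i ∈ A <;> simp [hxdef, h]
  have hboole : (∑ i, if i ∈ A then (1 : ℝ) else 0) = k := by
    rw [Finset.sum_boole]
    rw [hkdef]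
    congr 1
    simp
  have hsum : (∑ i, x i) = 0 := by
    simp only [hx']
    rw [Finset.sum_sub_distrib, hboole, Finset.sum_const, Finset.card_univ,
      Fintype.card_fin, nsmul_eq_mul, hcdef, hNdef]
    field_simp
    ring
  have hxx : x ⬝ᵥ x = k - k ^ 2 / N := by
    have h1 : ∀ i, x i * x i =
        (1 - 2 * c) * (if i ∈ A then (1 : ℝ) else 0) + c ^ 2 := by
      intro i; by_cases h : i ∈ A <;> simp [hxdef, h] <;> ring
    simp only [dotProduct, h1]
    rw [Finset.sum_add_distrib, ← Finset.mul_sum, hboole, Finset.sum_const,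
      Finset.card_univ, Fintype.card_fin, nsmul_eq_mul, hcdef]
    field_simp
    ring
  -- quadratic form equals number of crossing edges
  set d : Fin n → ℝ := fun w => ((A.filter fun u => G.Adj w u).card : ℝ) with hddef
  set e : ℝ := ∑ i, if i ∉ A then d i else 0 with hedef
  have hq : x ⬝ᵥ (G.lapMatrix ℝ).mulVec x = e := by
    rw [← Matrix.toLinearMap₂'_apply', SimpleGraph.lapMatrix_toLinearMap₂']
    have h2 : ∀ i j, (if G.Adj i j then (x i - x j) ^ 2 else 0) =
        (if i ∉ A ∧ j ∈ A ∧ G.Adj i j then (1 : ℝ) else 0) +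
        (if j ∉ A ∧ i ∈ A ∧ G.Adj j i then (1 : ℝ) else 0) := by
      intro i j
      by_cases hij : G.Adj i j
      · have hji : G.Adj j i := hij.symm
        by_cases hi : i ∈ A <;> by_cases hj : j ∈ A <;>
          simp [hxdef, hij, hji, hi, hj] <;> (try ring) <;> (try tauto) <;> (try norm_num)
      · have hji : ¬ G.Adj j i := fun h => hij h.symm
        by_cases hi : i ∈ A <;> by_cases hj : j ∈ A <;>
          simp [hxdef, hij, hji, hi, hj]
    have h3 : ∀ i : Fin n, (∑ j, if i ∉ A ∧ j ∈ A ∧ G.Adj i j then (1 : ℝ) else 0)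
        = if i ∉ A then d i else 0 := by
      intro i
      by_cases hi : i ∈ A
      · simp [hi]
      · simp only [hi, not_false_eq_true, true_and, if_true]
        rw [Finset.sum_boole, hddef]
        norm_num
        congr 1
        ext j
        simp
    have hT : (∑ i, ∑ j, if i ∉ A ∧ j ∈ A ∧ G.Adj i j then (1 : ℝ) else 0) = e := by
      rw [hedef]
      exact Finset.sum_congr rfl fun i _ => h3 i
    have h4 : (∑ i, ∑ j, if j ∉ A ∧ i ∈ A ∧ G.Adj j i then (1 : ℝ) else 0)
        = ∑ i, ∑ j, if i ∉ A ∧ j ∈ A ∧ G.Adj i j then (1 : ℝ) else 0 :=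
      Finset.sum_comm
    simp only [h2, Finset.sum_add_distrib]
    rw [h4, hT]
    ring
  have hmain := hcon x hsum
  rw [hxx, hq] at hmain
  -- bound e from above
  set B := (Finset.univ.filter fun w => w ∉ A ∧ α * N ≤ d w) with hBdef
  have hdN : ∀ i, d i ≤ N := by
    intro i
    have h := Finset.card_le_card (Finset.filter_subset (fun u => G.Adj i u) A)
    have h' : d i ≤ k := by
      show ((A.filter fun u => G.Adj i u).card : ℝ) ≤ (A.card : ℝ)
      exact_mod_cast h
    exact le_trans h' hkN
  have hdnn : ∀ i, 0 ≤ d i := fun i => by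
    show (0:ℝ) ≤ ((A.filter fun u => G.Adj i u).card : ℝ)
    positivity
  have heB : e ≤ (B.card : ℝ) * N + α * N * N := by
    have h5 : ∀ i : Fin n, (if i ∉ A then d i else 0) ≤
        (if i ∈ B then N else 0) + α * N := by
      intro i
      have hite : (0:ℝ) ≤ (if i ∈ B then N else 0) := by
        split
        · exact hN.le
        · exact le_rfl
      by_cases hi : i ∈ A
      · simp only [hi, not_true_eq_false, if_false]
        nlinarith [mul_pos hα hN]
      · simp only [hi, not_false_eq_true, if_true]
        by_cases hiB : i ∈ B
        · simp only [hiB, if_true]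
          nlinarith [hdN i, mul_pos hα hN]
        · simp only [hiB, if_false]
          have hlt : ¬ (α * N ≤ d i) := by
            intro hcontra
            have hmem : i ∈ B := by
              rw [hBdef, Finset.mem_filter]
              exact ⟨Finset.mem_univ i, hi, hcontra⟩
            exact hiB hmem
          linarith [(not_le.mp hlt).le]
    calc e ≤ ∑ i, ((if i ∈ B then N else 0) + α * N) := by
          rw [hedef]; exact Finset.sum_le_sum fun i _ => h5 i
      _ = (B.card : ℝ) * N + α * N * N := by
          rw [Finset.sum_add_distrib, Finset.sum_ite_mem, Finset.univ_inter,
            Finset.sum_const, Finset.sum_const, Finset.card_univ, Fintype.card_fin,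
            nsmul_eq_mul, nsmul_eq_mul, hNdef]
          ring
  -- final arithmetic
  have hgoal : α * N ≤ (B.card : ℝ) := by
    clear_value N k α c x d e
    clear hcon hsum hboole hx' hxx hq hxdef hcdef hddef hedef
    have hσ4 : σ ≤ 4 := by nlinarith
    have hquad : σ * k * (N - k) ≤ (B.card : ℝ) * N + α * N * N := by
      have heq : σ * N * (k - k ^ 2 / N) = σ * k * (N - k) := by
        field_simp
      rw [heq] at hmain
      linarith [hmain, heB]
    have hlow : σ * (a * N) * (σ * N / 4) ≤ σ * k * (N - k) := by
      have h1 : a * N ≤ k := hA1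
      have h2 : σ * N / 4 ≤ N - k := by linarith
      have h3 : (0:ℝ) ≤ a * N := by positivity
      have h4 : (0:ℝ) ≤ σ * N / 4 := by positivity
      have hk0 : (0:ℝ) ≤ k := le_trans h3 h1
      exact mul_le_mul (mul_le_mul_of_nonneg_left h1 hσ.le) h2 h4
        (mul_nonneg hσ.le hk0)
    rw [hαdef]
    rw [hαdef] at hquad
    have h0 : (0:ℝ) ≤ a * σ ^ 2 * (4 - σ) * (N * N) :=
      mul_nonneg (mul_nonneg (mul_nonneg ha.le (sq_nonneg σ))
        (by linarith)) (mul_pos hN hN).le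
    have hBN : a * σ ^ 3 / 32 * N * N ≤ (B.card : ℝ) * N := by nlinarith [hquad, hlow, h0]
    exact le_of_mul_le_mul_right hBN hN
  exact hgoal
end

section
/- Let G be a simple graph with n vertices and suppose its Laplacian Q satisfies λ₁ ≥ σn for σ > 0. Let M₁₁ be the principal minor of Q̂ = Q + J obtained by deleting the first row and column. Then there is a constant c₁ > 0 depending only on σ such that det M₁₁ ≤ c₁ · det(Q̂)/n for all sufficiently large n. -/
open Matrix

set_option maxHeartbeats 1000000 in
/-- If `λ₁(G) ≥ σ·|V|` then, for all sufficiently large `n`, the principal minor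
`M₁₁` of `Q̂ = Q + J` obtained by deleting the first row and column satisfies
`det M₁₁ ≤ c₁ · det Q̂ / |V|` for a constant `c₁ > 0` depending only on `σ`. -/
theorem stmt_18 (σ : ℝ) (hσ : 0 < σ) :
    ∃ c : ℝ, 0 < c ∧ ∃ N : ℕ, ∀ n, N ≤ n →
      ∀ (G : SimpleGraph (Fin (n + 1))) (_ : DecidableRel G.Adj),
        (∀ x : Fin (n + 1) → ℝ, (∑ i, x i) = 0 →
          σ * (n + 1) * (x ⬝ᵥ x) ≤ x ⬝ᵥ (G.lapMatrix ℝ).mulVec x) →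
        ((G.lapMatrix ℝ + (Matrix.of fun _ _ => (1 : ℝ) : Matrix (Fin (n + 1)) (Fin (n + 1)) ℝ)).submatrix
            Fin.succ Fin.succ).det ≤
          c * (G.lapMatrix ℝ + (Matrix.of fun _ _ => (1 : ℝ) : Matrix (Fin (n + 1)) (Fin (n + 1)) ℝ)).det / (n + 1) := by
  refine ⟨1 + 1/σ, by positivity, 0, fun n _ G _ hlam => ?_⟩
  set Q := G.lapMatrix ℝ with hQdef
  set J : Matrix (Fin (n+1)) (Fin (n+1)) ℝ := Matrix.of fun _ _ => (1:ℝ) with hJdef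
  set A := Q + J with hAdef
  have hn1 : (0:ℝ) < (n:ℝ) + 1 := by positivity
  -- Q symmetric
  have hQsym : Qᵀ = Q := G.isSymm_lapMatrix (R := ℝ)
  have hQ1 : Q.mulVec (fun _ => (1:ℝ)) = 0 := G.lapMatrix_mulVec_const_eq_zero
  -- J mulVec
  have hJmul : ∀ x : Fin (n+1) → ℝ, J.mulVec x = fun _ => ∑ i, x i := by
    intro x; funext i; simp [hJdef, mulVec, dotProduct]
  have hA1 : A.mulVec (fun _ => (1:ℝ)) = fun _ => ((n:ℝ)+1) := by
    funext i
    simp [hAdef, add_mulVec, hQ1, hJmul]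
  -- symmetry pairing
  have hAsym : Aᵀ = A := by
    simp [hAdef, transpose_add, hQsym, hJdef]
    ext i j; simp
  have hswap : ∀ x y : Fin (n+1) → ℝ, x ⬝ᵥ A.mulVec y = A.mulVec x ⬝ᵥ y := by
    intro x y
    rw [dotProduct_mulVec, ← mulVec_transpose, hAsym]
  have hQswap : ∀ x y : Fin (n+1) → ℝ, x ⬝ᵥ Q.mulVec y = Q.mulVec x ⬝ᵥ y := by
    intro x y
    rw [dotProduct_mulVec, ← mulVec_transpose, hQsym]
  -- quadratic form of A
  have hquad : ∀ x : Fin (n+1) → ℝ, x ⬝ᵥ A.mulVec x = x ⬝ᵥ Q.mulVec x + (∑ i, x i)^2 := by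
    intro x
    rw [hAdef, add_mulVec, dotProduct_add, hJmul]
    congr 1
    simp only [dotProduct, sq]
    rw [← Finset.sum_mul]
  -- Q quad form equals that on the projected vector
  have hproj : ∀ x : Fin (n+1) → ℝ, (∑ i, x i) = 0 → ∀ s : ℝ,
      (x + fun _ => s) ⬝ᵥ Q.mulVec (x + fun _ => s) = x ⬝ᵥ Q.mulVec x := by
    intro x hx s
    have hc : Q.mulVec (fun _ => s) = 0 := by
      have : ((fun _ => s) : Fin (n+1) → ℝ) = s • (fun _ => (1:ℝ)) := by funext i; simp
      rw [this, mulVec_smul, hQ1, smul_zero]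
    rw [mulVec_add, hc, add_zero, add_dotProduct]
    have h1 : (fun _ => s) ⬝ᵥ Q.mulVec x = 0 := by
      rw [hQswap, hc]; simp
    rw [h1, add_zero]
  -- positive definiteness
  have hPD : A.PosDef := by
    rw [posDef_iff_dotProduct_mulVec]
    constructor
    · rw [IsHermitian, conjTranspose_eq_transpose_of_trivial, hAsym]
    · intro x hx
      rw [star_trivial, hquad]
      set s : ℝ := (∑ i, x i) / ((n:ℝ)+1) with hs
      set y : Fin (n+1) → ℝ := x - fun _ => s with hy
      have hysum : (∑ i, y i) = 0 := by
        simp [hy, Finset.sum_sub_distrib, hs]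
        field_simp
        ring
      have hxy : x = y + fun _ => s := by funext i; simp [hy]
      have hQx : x ⬝ᵥ Q.mulVec x = y ⬝ᵥ Q.mulVec y := by
        conv_lhs => rw [hxy]
        exact hproj y hysum s
      have hylb := hlam y hysum
      have hynn : (0:ℝ) ≤ y ⬝ᵥ y :=
        Finset.sum_nonneg fun i _ => mul_self_nonneg _
      rcases eq_or_ne (∑ i, x i) 0 with h0 | h0
      · have hyx : y = x := by
          funext i; simp [hy, hs, h0]
        have hxnn : (0:ℝ) < x ⬝ᵥ x := by
          rcases lt_or_eq_of_le (by simpa [hyx] using hynn) with h | h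
          · exact h
          · exact absurd (dotProduct_self_eq_zero.mp h.symm) hx
        have := hlam x (by simp [h0])
        nlinarith [mul_pos (mul_pos hσ hn1) hxnn]
      · have h2 : (0:ℝ) < (∑ i, x i)^2 := by positivity
        nlinarith [mul_nonneg (mul_nonneg hσ.le hn1.le) hynn]
  have hdet : 0 < A.det := hPD.det_pos
  -- the inverse column
  set e : Fin (n+1) → ℝ := Pi.single 0 1 with he
  set w : Fin (n+1) → ℝ := A⁻¹.mulVec e with hw
  have hAinv : A * A⁻¹ = 1 := mul_nonsing_inv A (isUnit_iff_ne_zero.mpr hdet.ne')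
  have hAw : A.mulVec w = e := by
    rw [hw, mulVec_mulVec, hAinv, one_mulVec]
  have hw0 : w 0 = A⁻¹ 0 0 := by
    simp [hw, he, mulVec_single]
  -- sum of w
  have hsumw : (∑ i, w i) = 1 / ((n:ℝ)+1) := by
    have h1 : (fun _ => (1:ℝ)) ⬝ᵥ A.mulVec w = (fun _ => (1:ℝ)) ⬝ᵥ e := by rw [hAw]
    rw [hswap, hA1] at h1
    simp [dotProduct, he, Finset.mul_sum] at h1
    rw [← Finset.mul_sum] at h1
    field_simp
    linarith [h1]
  -- decompose w
  set z : Fin (n+1) → ℝ := w - fun _ => 1/((n:ℝ)+1)^2 with hz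
  have hzsum : (∑ i, z i) = 0 := by
    simp [hz, Finset.sum_sub_distrib, hsumw]
    field_simp
    ring
  have hwz : w = z + fun _ => 1/((n:ℝ)+1)^2 := by funext i; simp [hz]
  -- z quad form
  have hzA : z ⬝ᵥ A.mulVec z = z 0 := by
    have hAz : A.mulVec z = e - fun _ => 1/((n:ℝ)+1) := by
      have : A.mulVec (fun _ => 1/((n:ℝ)+1)^2) = fun _ => 1/((n:ℝ)+1) := by
        have h : ((fun _ => 1/((n:ℝ)+1)^2) : Fin (n+1) → ℝ) = (1/((n:ℝ)+1)^2) • (fun _ => (1:ℝ)) := by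
          funext i; simp
        rw [h, mulVec_smul, hA1]
        funext i
        simp
        field_simp
      have h2 : A.mulVec w = A.mulVec z + A.mulVec (fun _ => 1/((n:ℝ)+1)^2) := by
        rw [← mulVec_add, ← hwz]
      rw [hAw, this] at h2
      funext i
      have := congrFun h2 i
      simp at this ⊢
      linarith
    have h1 : z ⬝ᵥ e = z 0 := by simp [he]
    have h2 : (z ⬝ᵥ fun _ => 1/((n:ℝ)+1)) = 0 := by
      simp only [dotProduct]
      rw [← Finset.sum_mul, hzsum, zero_mul]
    rw [hAz, dotProduct_sub, h1, h2, sub_zero]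
  -- bound on z
  have hzQ : σ * ((n:ℝ)+1) * (z ⬝ᵥ z) ≤ z 0 := by
    have := hlam z hzsum
    rw [hquad, hzsum] at hzA
    simp at hzA
    linarith
  have hznn : (0:ℝ) ≤ z ⬝ᵥ z :=
    Finset.sum_nonneg fun i _ => mul_self_nonneg _
  have hz0sq : (z 0)^2 ≤ z ⬝ᵥ z := by
    have := Finset.single_le_sum (f := fun i => z i * z i) (fun i _ => mul_self_nonneg _)
      (Finset.mem_univ (0 : Fin (n+1)))
    simpa [dotProduct, sq] using this
  have hz0 : z 0 ≤ 1 / (σ * ((n:ℝ)+1)) := by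
    rcases le_or_gt (z 0) 0 with h | h
    · have : (0:ℝ) < 1 / (σ * ((n:ℝ)+1)) := by positivity
      linarith
    · have hzz : (0:ℝ) < z ⬝ᵥ z := by nlinarith [pow_pos h 2]
      have h1 : σ * ((n:ℝ)+1) * (z 0)^2 ≤ z 0 := le_trans (by nlinarith [mul_le_mul_of_nonneg_left hz0sq (by positivity : (0:ℝ) ≤ σ * ((n:ℝ)+1))]) hzQ
      have h2 : σ * ((n:ℝ)+1) * (z 0) ≤ 1 := by
        have := mul_le_mul_of_nonneg_right h1 (le_of_lt (inv_pos.mpr h))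
        calc σ * ((n:ℝ)+1) * (z 0) = σ * ((n:ℝ)+1) * (z 0)^2 * (z 0)⁻¹ := by
              field_simp
          _ ≤ z 0 * (z 0)⁻¹ := this
          _ = 1 := by field_simp
      rw [le_div_iff₀ (by positivity)]
      linarith [h2]
  -- bound on the inverse entry
  have hinv00 : A⁻¹ 0 0 ≤ (1 + 1/σ) / ((n:ℝ)+1) := by
    rw [← hw0, hwz]
    simp only [Pi.add_apply]
    have h1 : (1:ℝ)/((n:ℝ)+1)^2 ≤ (1:ℝ)/((n:ℝ)+1) := by
      rw [div_le_div_iff₀ (by positivity) (by positivity)]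
      nlinarith
    have h2 : (1:ℝ) / (σ * ((n:ℝ)+1)) = (1/σ) / ((n:ℝ)+1) := by
      field_simp
    calc z 0 + 1/((n:ℝ)+1)^2 ≤ 1/(σ*((n:ℝ)+1)) + 1/((n:ℝ)+1) := by linarith
      _ = (1/σ)/((n:ℝ)+1) + 1/((n:ℝ)+1) := by rw [h2]
      _ = (1 + 1/σ)/((n:ℝ)+1) := by ring
  -- conclude via adjugate
  have hminor : (A.submatrix Fin.succ Fin.succ).det = A.adjugate 0 0 := by
    rw [adjugate_fin_succ_eq_det_submatrix]
    simp [Fin.succAbove_zero]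
  have hadj : A.adjugate 0 0 = A.det * A⁻¹ 0 0 := by
    rw [inv_def]
    simp
    field_simp
  rw [hminor, hadj, div_eq_inv_mul, ← mul_assoc]
  calc A.det * A⁻¹ 0 0 ≤ A.det * ((1 + 1/σ) / ((n:ℝ)+1)) :=
        mul_le_mul_of_nonneg_left hinv00 hdet.le
    _ = ((n:ℝ)+1)⁻¹ * (1 + 1/σ) * A.det := by ring
end
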